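/- For any g in the symplectic group SP(2n), any subsets A, D of {1,...,n} with #A + #D + 2 = k ≤ n, the pairing ⟨e*_{A,D̄} ∧ Ω, g·(e_1∧...∧e_k)⟩ equals 0, where e*_{A,D̄} = e*_{p_1}∧...∧e*_{p_s}∧e*_{q̄_t}∧...∧e*_{q̄_1} for A = {p_1<...<p_s}, D = {q_1<...<q_t}. (These are the internal Plücker relations of sp(2n).) -/

import Mathlib

/-!
Internal Plücker relations for `sp(2n)` : for `g ∈ SP(2n)` and subsets `A, D ⊆ {1,…,n}` with
`#A + #D + 2 = k ≤ n`, the pairing `⟨e*_{A,D̄} ∧ Ω, g·(e_1 ∧ ⋯ ∧ e_k)⟩` vanishes.  Expanding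
`Ω = Σ_i e_i^* ∧ e_{ī}^*`, this pairing is the sum over `i` of the determinants of the `k × k`
matrices whose rows are the rows `p_1, …, p_s, q̄_t, …, q̄_1, i, ī` of `g` and whose columns are
the columns `1, …, k` of `g`.
-/

noncomputable section

/-- The matrix of the standard symplectic form `Ω = Σ_i e_i^* ∧ e_{ī}^*` on `ℂ^{2n}`,
the basis being ordered `e_1, …, e_n, e_{n̄}, …, e_{1̄}`. -/
def Jmat (n : ℕ) : Matrix (Fin (2 * n)) (Fin (2 * n)) ℂ :=
  Matrix.of fun a b =>
    if (a : ℕ) < n ∧ (b : ℕ) = 2 * n - 1 - (a : ℕ) then 1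
    else if (b : ℕ) < n ∧ (a : ℕ) = 2 * n - 1 - (b : ℕ) then -1 else 0

/-- The symplectic group: matrices preserving `Ω`. -/
def IsSymplectic (n : ℕ) (g : Matrix (Fin (2 * n)) (Fin (2 * n)) ℂ) : Prop :=
  Matrix.transpose g * Jmat n * g = Jmat n

/-- Inclusion of an unbarred index `i ∈ {1,…,n}` among the `2n` basis indices. -/
def emb (n : ℕ) (i : Fin n) : Fin (2 * n) := ⟨(i : ℕ), by have := i.isLt; omega⟩

/-- The barred index `ī` : position `2n - 1 - i` (0-based). -/
def barF (n : ℕ) (i : Fin n) : Fin (2 * n) := ⟨2 * n - 1 - (i : ℕ), by have := i.isLt; omega⟩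

/-- splitting `Fin (2n)` into unbarred and barred halves -/
def halfEquiv (n : ℕ) : Fin n ⊕ Fin n ≃ Fin (2 * n) where
  toFun := Sum.elim (emb n) (barF n)
  invFun p := if h : (p : ℕ) < n then .inl ⟨(p : ℕ), h⟩
    else .inr ⟨2 * n - 1 - (p : ℕ), by have := p.isLt; omega⟩
  left_inv := by
    rintro (i | i)
    · simp [emb]
    · have hi := i.isLt
      have h1 : ¬ ((barF n i : ℕ) < n) := by simp [barF]; omega
      simp only [Sum.elim_inr, h1, dif_neg, not_false_iff]
      change (if h : ((barF n i : Fin (2 * n)) : ℕ) < n then (Sum.inl ⟨_, h⟩ : Fin n ⊕ Fin n)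
        else Sum.inr ⟨2 * n - 1 - ((barF n i : Fin (2 * n)) : ℕ),
          by have := (barF n i).isLt; omega⟩) = Sum.inr i
      rw [dif_neg h1]
      congr 1
      apply Fin.ext
      simp [barF]; omega
  right_inv := by
    intro p
    have hp := p.isLt
    by_cases h : (p : ℕ) < n
    · simp [h, emb]
    · simp only [h, dif_neg, not_false_iff, Sum.elim_inr]
      apply Fin.ext
      simp [barF]; omega

lemma sum_split (n : ℕ) (f : Fin (2 * n) → ℂ) :
    ∑ p : Fin (2 * n), f p = ∑ i : Fin n, f (emb n i) + ∑ i : Fin n, f (barF n i) := by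
  rw [← Equiv.sum_comp (halfEquiv n) f, Fintype.sum_sum_type]
  rfl


/-- the key consequence of being symplectic -/
lemma symp_entry (n : ℕ) (g : Matrix (Fin (2 * n)) (Fin (2 * n)) ℂ)
    (hg : IsSymplectic n g) (a b : Fin (2 * n)) (ha : (a : ℕ) < n) (hb : (b : ℕ) < n) :
    ∑ i : Fin n, (g (emb n i) a * g (barF n i) b - g (barF n i) a * g (emb n i) b) = 0 := by
  have hb2 := b.isLt
  have h0 : (Matrix.transpose g * Jmat n * g) a b = Jmat n a b := by rw [hg]
  have hJ0 : Jmat n a b = 0 := by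
    simp only [Jmat, Matrix.of_apply]
    rw [if_neg (by omega), if_neg (by omega)]
  rw [hJ0] at h0
  simp only [Matrix.mul_apply, Matrix.transpose_apply] at h0
  have h1 : ∑ q : Fin (2 * n), (∑ p : Fin (2 * n), g p a * Jmat n p q) * g q b
      = ∑ p : Fin (2 * n), ∑ q : Fin (2 * n), g p a * Jmat n p q * g q b := by
    rw [Finset.sum_comm]
    exact Finset.sum_congr rfl fun q _ => Finset.sum_mul _ _ _
  rw [h1] at h0
  have hL : ∀ p : Fin (2 * n), ∑ q : Fin (2 * n), g p a * Jmat n p q * g q b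
      = g p a * (if (p : ℕ) < n then g ⟨2 * n - 1 - (p : ℕ), by have := p.isLt; omega⟩ b
        else - g ⟨2 * n - 1 - (p : ℕ), by have := p.isLt; omega⟩ b) := by
    intro p
    have hp2 := p.isLt
    rw [Finset.sum_eq_single (⟨2 * n - 1 - (p : ℕ), by omega⟩ : Fin (2 * n))]
    · by_cases hp : (p : ℕ) < n
      · have hJ : Jmat n p ⟨2 * n - 1 - (p : ℕ), by omega⟩ = 1 := by
          simp only [Jmat, Matrix.of_apply]
          rw [if_pos]
          exact ⟨hp, trivial⟩
        rw [hJ, if_pos hp]; ring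
      · have hJ : Jmat n p ⟨2 * n - 1 - (p : ℕ), by omega⟩ = -1 := by
          simp only [Jmat, Matrix.of_apply]
          rw [if_neg (fun hh => hp hh.1), if_pos]
          exact ⟨by omega, by omega⟩
        rw [hJ, if_neg hp]; ring
    · intro q _ hq
      have hq2 := q.isLt
      have hJ : Jmat n p q = 0 := by
        simp only [Jmat, Matrix.of_apply]
        rw [if_neg, if_neg]
        · rintro ⟨h1', h2'⟩
          exact hq (Fin.ext (show (q : ℕ) = 2 * n - 1 - (p : ℕ) by omega))
        · rintro ⟨h1', h2'⟩
          exact hq (Fin.ext h2')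
      rw [hJ]; ring
    · intro h; exact absurd (Finset.mem_univ _) h
  rw [Finset.sum_congr rfl fun p _ => hL p] at h0
  rw [sum_split] at h0
  have he : ∀ i : Fin n,
      g (emb n i) a * (if ((emb n i : Fin (2*n)) : ℕ) < n then
        g ⟨2 * n - 1 - ((emb n i : Fin (2*n)) : ℕ), by have := (emb n i).isLt; omega⟩ b
        else - g ⟨2 * n - 1 - ((emb n i : Fin (2*n)) : ℕ), by have := (emb n i).isLt; omega⟩ b)
      = g (emb n i) a * g (barF n i) b := by
    intro i
    have hi := i.isLt
    rw [if_pos (show ((emb n i : Fin (2*n)) : ℕ) < n from hi)]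
    congr 1
  have hf : ∀ i : Fin n,
      g (barF n i) a * (if ((barF n i : Fin (2*n)) : ℕ) < n then
        g ⟨2 * n - 1 - ((barF n i : Fin (2*n)) : ℕ), by have := (barF n i).isLt; omega⟩ b
        else - g ⟨2 * n - 1 - ((barF n i : Fin (2*n)) : ℕ), by have := (barF n i).isLt; omega⟩ b)
      = - (g (barF n i) a * g (emb n i) b) := by
    intro i
    have hi := i.isLt
    rw [if_neg (show ¬ ((barF n i : Fin (2*n)) : ℕ) < n by simp only [barF]; omega)]
    have hbar : (⟨2 * n - 1 - ((barF n i : Fin (2*n)) : ℕ), by have := (barF n i).isLt; omega⟩ : Fin (2*n)) = emb n i := by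
      apply Fin.ext
      simp only [emb, barF]
      omega
    rw [hbar]; ring
  rw [Finset.sum_congr rfl fun i _ => he i, Finset.sum_congr rfl fun i _ => hf i] at h0
  rw [Finset.sum_sub_distrib]
  rw [Finset.sum_neg_distrib] at h0
  linear_combination h0


lemma aux (n k : ℕ) (g : Matrix (Fin (2 * n)) (Fin (2 * n)) ℂ)
    (hg : IsSymplectic n g) (hk : k ≤ n) (hk2 : 2 ≤ k)
    (base : List (Fin (2 * n))) (hblen : base.length = k - 2)
    (d0 : Fin (2 * n)) (hc : ∀ c : Fin k, (c : ℕ) < 2 * n) :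
    ∑ i : Fin n, Matrix.det (Matrix.of fun r c : Fin k =>
      g ((base ++ [emb n i, barF n i]).getD (r : ℕ) d0) ⟨(c : ℕ), hc c⟩) = 0 := by
  classical
  set ck : Fin k → Fin (2 * n) := fun c => ⟨(c : ℕ), hc c⟩ with hck
  set i1 : Fin k := ⟨k - 2, by omega⟩ with hi1
  set i2 : Fin k := ⟨k - 1, by omega⟩ with hi2
  have hi1v : (i1 : ℕ) = k - 2 := rfl
  have hi2v : (i2 : ℕ) = k - 1 := rfl
  have hi12 : i1 ≠ i2 := by
    intro h
    have := congrArg Fin.val h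
    rw [hi1v, hi2v] at this
    omega
  set M0 : Fin k → Fin k → ℂ := fun r c => g (base.getD (r : ℕ) d0) (ck c) with hM0
  set u : Fin n → Fin k → ℂ := fun i c => g (emb n i) (ck c) with hu
  set v : Fin n → Fin k → ℂ := fun i c => g (barF n i) (ck c) with hv
  set dl : ((Fin k → ℂ) [⋀^Fin k]→ₗ[ℂ] ℂ) := Matrix.detRowAlternating with hdl
  set δ : Fin k → (Fin k → ℂ) := fun c c' => if c' = c then 1 else 0 with hδ
  set B : Fin k → Fin k → ℂ := fun c c' =>
    dl (Function.update (Function.update M0 i1 (δ c)) i2 (δ c')) with hB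
  -- step 1 : each determinant is `dl` of an updated row family
  have hget : ∀ (i : Fin n) (m : ℕ), (base ++ [emb n i, barF n i]).getD m d0 =
      if m < k - 2 then base.getD m d0
      else if m = k - 2 then emb n i else if m = k - 1 then barF n i else d0 := by
    intro i m
    by_cases h : m < k - 2
    · rw [List.getD_append _ _ _ _ (by omega), if_pos h]
    · rw [List.getD_append_right _ _ _ _ (by omega), if_neg h, hblen]
      by_cases h2 : m = k - 2
      · subst h2
        simp
      · rw [if_neg h2]
        by_cases h3 : m = k - 1
        · subst h3
          have e : k - 1 - (k - 2) = 1 := by omega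
          rw [e, if_pos rfl]
          rfl
        · rw [if_neg h3]
          exact List.getD_eq_default _ _ (by simp; omega)
  have hdet : ∀ i : Fin n,
      Matrix.det (Matrix.of fun r c : Fin k =>
        g ((base ++ [emb n i, barF n i]).getD (r : ℕ) d0) ⟨(c : ℕ), hc c⟩)
      = dl (Function.update (Function.update M0 i1 (u i)) i2 (v i)) := by
    intro i
    have hrow : (Matrix.of fun r c : Fin k =>
        g ((base ++ [emb n i, barF n i]).getD (r : ℕ) d0) ⟨(c : ℕ), hc c⟩)
        = Matrix.of (Function.update (Function.update M0 i1 (u i)) i2 (v i)) := by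
      ext r c
      simp only [Matrix.of_apply]
      by_cases h2 : r = i2
      · subst h2
        rw [Function.update_self, hget]
        rw [if_neg (by omega), if_neg (by rw [hi2v]; omega), if_pos hi2v]
      · rw [Function.update_of_ne h2]
        by_cases h1 : r = i1
        · subst h1
          rw [Function.update_self, hget]
          rw [if_neg (by omega), if_pos hi1v]
        · have hr1 : (r : ℕ) ≠ k - 2 := fun hh => h1 (Fin.ext (hh.trans hi1v.symm))
          have hr2 : (r : ℕ) ≠ k - 1 := fun hh => h2 (Fin.ext (hh.trans hi2v.symm))
          have hrlt : (r : ℕ) < k - 2 := by have := r.isLt; omega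
          rw [Function.update_of_ne h1, hget, if_pos hrlt]
    rw [hrow]
    rfl
  rw [Finset.sum_congr rfl fun i _ => hdet i]
  -- step 2 : bilinear expansion
  have hdec : ∀ f : Fin k → ℂ, f = ∑ c : Fin k, f c • δ c := by
    intro f
    funext x
    simp only [Finset.sum_apply, Pi.smul_apply, hδ, smul_eq_mul, mul_ite, mul_one, mul_zero]
    rw [Finset.sum_ite_eq Finset.univ x f]
    simp
  have hexp : ∀ i : Fin n,
      dl (Function.update (Function.update M0 i1 (u i)) i2 (v i))
        = ∑ c : Fin k, ∑ c' : Fin k, u i c * v i c' * B c c' := by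
    intro i
    conv_lhs => rw [hdec (v i)]
    rw [AlternatingMap.map_update_sum]
    rw [Finset.sum_congr rfl fun c' _ => dl.map_update_smul _ i2 (v i c') (δ c')]
    have inner : ∀ c' : Fin k,
        dl (Function.update (Function.update M0 i1 (u i)) i2 (δ c'))
          = ∑ c : Fin k, u i c • B c c' := by
      intro c'
      rw [Function.update_comm hi12]
      conv_lhs => rw [hdec (u i)]
      rw [AlternatingMap.map_update_sum]
      refine Finset.sum_congr rfl fun c _ => ?_
      rw [dl.map_update_smul _ i1 (u i c) (δ c), Function.update_comm hi12.symm]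
    rw [Finset.sum_congr rfl fun c' _ => congrArg _ (inner c')]
    rw [Finset.sum_comm]
    refine Finset.sum_congr rfl fun c _ => ?_
    simp only [smul_eq_mul, Finset.mul_sum]
    refine Finset.sum_congr rfl fun c' _ => ?_
    ring
  rw [Finset.sum_congr rfl fun i _ => hexp i]
  -- step 3 : exchange sums
  have hswap : ∑ i : Fin n, ∑ c : Fin k, ∑ c' : Fin k, u i c * v i c' * B c c'
      = ∑ c : Fin k, ∑ c' : Fin k, (∑ i : Fin n, u i c * v i c') * B c c' := by
    rw [Finset.sum_comm]
    refine Finset.sum_congr rfl fun c _ => ?_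
    rw [Finset.sum_comm]
    refine Finset.sum_congr rfl fun c' _ => ?_
    rw [Finset.sum_mul]
  rw [hswap]
  -- step 4 : symmetry of S and antisymmetry of B
  have hS : ∀ c c' : Fin k, (∑ i : Fin n, u i c * v i c') = ∑ i : Fin n, u i c' * v i c := by
    intro c c'
    have h := symp_entry n g hg (ck c) (ck c') (by simpa [hck] using lt_of_lt_of_le c.isLt hk)
      (by simpa [hck] using lt_of_lt_of_le c'.isLt hk)
    rw [Finset.sum_sub_distrib, sub_eq_zero] at h
    rw [show (∑ i : Fin n, u i c * v i c') = ∑ i : Fin n, g (emb n i) (ck c) * g (barF n i) (ck c') from rfl]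
    rw [h]
    exact Finset.sum_congr rfl fun i _ => by ring
  have hBskew : ∀ c c' : Fin k, B c' c = - B c c' := by
    intro c c'
    have hcomp : Function.update (Function.update M0 i1 (δ c)) i2 (δ c') ∘ Equiv.swap i1 i2
        = Function.update (Function.update M0 i1 (δ c')) i2 (δ c) := by
      funext x
      simp only [Function.comp_apply]
      rcases eq_or_ne x i1 with h | h
      · subst h
        rw [show Equiv.swap i1 i2 i1 = i2 from Equiv.swap_apply_left _ _]
        rw [Function.update_self, Function.update_of_ne hi12, Function.update_self]
      · rcases eq_or_ne x i2 with h' | h'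
        · subst h'
          rw [show Equiv.swap i1 i2 i2 = i1 from Equiv.swap_apply_right _ _]
          rw [Function.update_of_ne hi12, Function.update_self, Function.update_self]
        · rw [show Equiv.swap i1 i2 x = x from Equiv.swap_apply_of_ne_of_ne h h']
          rw [Function.update_of_ne h', Function.update_of_ne h,
            Function.update_of_ne h', Function.update_of_ne h]
    have hsw := dl.map_swap (v := Function.update (Function.update M0 i1 (δ c)) i2 (δ c')) hi12
    rw [hcomp] at hsw
    exact hsw
  -- step 5 : conclude
  have hflip : ∑ c : Fin k, ∑ c' : Fin k, (∑ i : Fin n, u i c * v i c') * B c c'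
      = - ∑ c : Fin k, ∑ c' : Fin k, (∑ i : Fin n, u i c * v i c') * B c c' := by
    conv_lhs => rw [Finset.sum_comm]
    rw [← Finset.sum_neg_distrib]
    refine Finset.sum_congr rfl fun c _ => ?_
    rw [← Finset.sum_neg_distrib]
    refine Finset.sum_congr rfl fun c' _ => ?_
    rw [hS c' c, hBskew c c']
    ring
  linear_combination hflip / 2

/-- **internal Plücker relations of `sp(2n)`.**
For `g ∈ SP(2n)`, `A, D ⊆ {1,…,n}` with `#A + #D + 2 = k ≤ n`,
`⟨e*_{A,D̄} ∧ Ω, g e_1 ∧ ⋯ ∧ g e_k⟩ = Σ_{i=1}^n ⟨e*_{A,D̄} ∧ e_i^* ∧ e_{ī}^*, g e_1 ∧ ⋯ ∧ g e_k⟩ = 0`,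
each summand being the determinant of the submatrix of `g` on the rows listed as
`A` increasing, then `D̄` (i.e. `q̄_t, …, q̄_1`), then `i, ī`, and on the columns `1, …, k`. -/
theorem internal_pluecker (n k : ℕ) (g : Matrix (Fin (2 * n)) (Fin (2 * n)) ℂ)
    (hg : IsSymplectic n g) (A D : Finset (Fin n))
    (hcard : A.card + D.card + 2 = k) (hk : k ≤ n) :
    ∑ i : Fin n,
      Matrix.det (Matrix.of fun r c : Fin k =>
        g (((A.sort (· ≤ ·)).map (emb n) ++ ((D.sort (· ≤ ·)).reverse.map (barF n)) ++
              [emb n i, barF n i]).getD (r : ℕ) (⟨0, by omega⟩ : Fin (2 * n)))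
          (⟨(c : ℕ), by have := c.isLt; omega⟩ : Fin (2 * n))) = 0 := by
  refine aux n k g hg hk (by omega)
    ((A.sort (· ≤ ·)).map (emb n) ++ ((D.sort (· ≤ ·)).reverse.map (barF n)))
    (by simp [Finset.length_sort]; omega) _ (fun c => by have := c.isLt; omega)

end
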